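/- Let L be a finite distributive lattice with at least three elements that is simple (has no apex). Then the comparability graph of L is chordal if and only if there exists n ≥ 1 such that L is order-isomorphic to the product Fin 2 × Fin (n+1) of a two-element chain and an (n+1)-element chain with componentwise order (i.e., to the divisor lattice D_{2·3^n}). -/

import Mathlib

/-- The comparability graph of a poset: two distinct elements are adjacent iff they are
comparable. -/
def compGraph (Q : Type*) [PartialOrder Q] : SimpleGraph Q where
  Adj x y := x ≠ y ∧ (x ≤ y ∨ y ≤ x)
  symm := ⟨fun _ _ h => ⟨h.1.symm, h.2.symm⟩⟩
  loopless := ⟨fun _ h => h.1 rfl⟩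

/-- `f` is an induced cycle of length `n` in `G`, with vertices indexed by `ZMod n`:
`f` is injective and two vertices of the cycle are adjacent iff they are consecutive. -/
def IsInducedCycle {V : Type*} (G : SimpleGraph V) (n : ℕ) (f : ZMod n → V) : Prop :=
  Function.Injective f ∧ ∀ i j : ZMod n, G.Adj (f i) (f j) ↔ (j = i + 1 ∨ i = j + 1)

/-- A graph is chordal if it has no induced cycle of length at least 4. -/
def SimpleGraph.Chordal {V : Type*} (G : SimpleGraph V) : Prop :=
  ¬ ∃ (n : ℕ) (f : ZMod n → V), 4 ≤ n ∧ IsInducedCycle G n f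

section Cycles

variable {L : Type*} [Lattice L]

lemma compGraph_adj {u v : L} : (compGraph L).Adj u v ↔ (u ≠ v ∧ (u ≤ v ∨ v ≤ u)) := Iff.rfl

lemma cyc4 {x y p q : L} (hxy : ¬ x ≤ y) (hyx : ¬ y ≤ x)
    (hpq : ¬ p ≤ q) (hqp : ¬ q ≤ p)
    (hxp : x ≤ p) (hxq : x ≤ q) (hyp : y ≤ p) (hyq : y ≤ q) :
    ¬ (compGraph L).Chordal := fun h => h <| by
  have nxy : x ≠ y := fun e => hxy e.le
  have npq : p ≠ q := fun e => hpq e.le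
  have nxp : x ≠ p := fun e => hyx (e ▸ hyp)
  have nxq : x ≠ q := fun e => hyx (e ▸ hyq)
  have nyp : y ≠ p := fun e => hxy (e ▸ hxp)
  have nyq : y ≠ q := fun e => hxy (e ▸ hxq)
  set f : ZMod 4 → L := fun i => if i = 0 then x else if i = 1 then p else if i = 2 then y else q with hf
  have h4 : ∀ i : ZMod 4, i = 0 ∨ i = 1 ∨ i = 2 ∨ i = 3 := by decide
  have hf0 : f 0 = x := by simp [hf]
  have hf1 : f 1 = p := by
    simp [hf, show (1:ZMod 4) ≠ 0 from by decide]
  have hf2 : f 2 = y := by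
    simp [hf, show (2:ZMod 4) ≠ 0 from by decide, show (2:ZMod 4) ≠ 1 from by decide]
  have hf3 : f 3 = q := by
    simp [hf, show (3:ZMod 4) ≠ 0 from by decide, show (3:ZMod 4) ≠ 1 from by decide,
      show (3:ZMod 4) ≠ 2 from by decide]
  refine ⟨4, f, le_refl _, ?_, ?_⟩
  · intro i j hij
    rcases h4 i with rfl|rfl|rfl|rfl <;> rcases h4 j with rfl|rfl|rfl|rfl <;>
      simp only [hf0, hf1, hf2, hf3] at hij <;>
      first | rfl | (exact absurd hij (by assumption)) | (exact absurd hij.symm (by assumption))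
  · intro i j
    rcases h4 i with rfl|rfl|rfl|rfl <;> rcases h4 j with rfl|rfl|rfl|rfl <;>
      simp only [hf0, hf1, hf2, hf3, compGraph_adj] <;>
      constructor <;> intro hh <;>
      first
        | decide
        | (exact ⟨by assumption, Or.inl (by assumption)⟩)
        | (exact ⟨by assumption, Or.inr (by assumption)⟩)
        | (exact ⟨Ne.symm (by assumption), Or.inl (by assumption)⟩)
        | (exact ⟨Ne.symm (by assumption), Or.inr (by assumption)⟩)
        | (exact absurd hh (by decide))
        | (exfalso; rcases hh with ⟨hne, hc | hc⟩ <;> first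
            | (exact absurd hc (by assumption))
            | (exact hne rfl))

lemma cyc6 {x y z : L} (hxy : ¬ x ≤ y) (hyx : ¬ y ≤ x)
    (hyz : ¬ y ≤ z) (hzy : ¬ z ≤ y) (hxz : ¬ x ≤ z) (hzx : ¬ z ≤ x)
    (hx : ¬ x ≤ y ⊔ z) (hy : ¬ y ≤ z ⊔ x) (hz : ¬ z ≤ x ⊔ y) :
    ¬ (compGraph L).Chordal := fun h => h <| by
  -- p, q, r : the pairwise joins
  set p : L := x ⊔ y with hp
  set q : L := y ⊔ z with hq
  set r : L := z ⊔ x with hr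
  have hxp : x ≤ p := le_sup_left
  have hyp' : y ≤ p := le_sup_right
  have hyq : y ≤ q := le_sup_left
  have hzq : z ≤ q := le_sup_right
  have hzr : z ≤ r := le_sup_left
  have hxr : x ≤ r := le_sup_right
  -- incomparabilities with the joins
  have hqx : ¬ q ≤ x := fun h => hyx (hyq.trans h)
  have hry : ¬ r ≤ y := fun h => hzy (hzr.trans h)
  have hpz : ¬ p ≤ z := fun h => hxz (hxp.trans h)
  have hpq : ¬ p ≤ q := fun h => hx (hxp.trans h)
  have hqp : ¬ q ≤ p := fun h => hz (hzq.trans h)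
  have hqr : ¬ q ≤ r := fun h => hy (hyq.trans h)
  have hrq : ¬ r ≤ q := fun h => hx (hxr.trans h)
  have hpr : ¬ p ≤ r := fun h => hy (hyp'.trans h)
  have hrp : ¬ r ≤ p := fun h => hz (hzr.trans h)
  -- distinctness
  have nxy : x ≠ y := fun e => hxy e.le
  have nyz : y ≠ z := fun e => hyz e.le
  have nxz : x ≠ z := fun e => hxz e.le
  have nxq : x ≠ q := fun e => hx e.le
  have nyr : y ≠ r := fun e => hy e.le
  have nzp : z ≠ p := fun e => hz e.le
  have npq : p ≠ q := fun e => hpq e.le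
  have nqr : q ≠ r := fun e => hqr e.le
  have npr : p ≠ r := fun e => hpr e.le
  have nxp : x ≠ p := fun e => hyx (hyp'.trans e.symm.le)
  have nxr : x ≠ r := fun e => hzx (hzr.trans e.symm.le)
  have nyp : y ≠ p := fun e => hxy (hxp.trans e.symm.le)
  have nyq : y ≠ q := fun e => hzy (hzq.trans e.symm.le)
  have nzq : z ≠ q := fun e => hyz (hyq.trans e.symm.le)
  have nzr : z ≠ r := fun e => hxz (hxr.trans e.symm.le)
  set f : ZMod 6 → L := fun i =>
    if i = 0 then x else if i = 1 then p else if i = 2 then y else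
    if i = 3 then q else if i = 4 then z else r with hf
  have h6 : ∀ i : ZMod 6, i = 0 ∨ i = 1 ∨ i = 2 ∨ i = 3 ∨ i = 4 ∨ i = 5 := by decide
  have hf0 : f 0 = x := by simp [hf]
  have hf1 : f 1 = p := by
    simp [hf, show (1:ZMod 6) ≠ 0 from by decide]
  have hf2 : f 2 = y := by
    simp [hf, show (2:ZMod 6) ≠ 0 from by decide, show (2:ZMod 6) ≠ 1 from by decide]
  have hf3 : f 3 = q := by
    simp [hf, show (3:ZMod 6) ≠ 0 from by decide, show (3:ZMod 6) ≠ 1 from by decide,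
      show (3:ZMod 6) ≠ 2 from by decide]
  have hf4 : f 4 = z := by
    simp [hf, show (4:ZMod 6) ≠ 0 from by decide, show (4:ZMod 6) ≠ 1 from by decide,
      show (4:ZMod 6) ≠ 2 from by decide, show (4:ZMod 6) ≠ 3 from by decide]
  have hf5 : f 5 = r := by
    simp [hf, show (5:ZMod 6) ≠ 0 from by decide, show (5:ZMod 6) ≠ 1 from by decide,
      show (5:ZMod 6) ≠ 2 from by decide, show (5:ZMod 6) ≠ 3 from by decide,
      show (5:ZMod 6) ≠ 4 from by decide]
  refine ⟨6, f, by norm_num, ?_, ?_⟩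
  · intro i j hij
    rcases h6 i with rfl|rfl|rfl|rfl|rfl|rfl <;> rcases h6 j with rfl|rfl|rfl|rfl|rfl|rfl <;>
      simp only [hf0, hf1, hf2, hf3, hf4, hf5] at hij <;>
      first | rfl | (exact absurd hij (by assumption)) | (exact absurd hij.symm (by assumption))
  · intro i j
    rcases h6 i with rfl|rfl|rfl|rfl|rfl|rfl <;> rcases h6 j with rfl|rfl|rfl|rfl|rfl|rfl <;>
      simp only [hf0, hf1, hf2, hf3, hf4, hf5, compGraph_adj] <;>
      constructor <;> intro hh <;>
      first
        | decide
        | (exact ⟨by assumption, Or.inl (by assumption)⟩)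
        | (exact ⟨by assumption, Or.inr (by assumption)⟩)
        | (exact ⟨Ne.symm (by assumption), Or.inl (by assumption)⟩)
        | (exact ⟨Ne.symm (by assumption), Or.inr (by assumption)⟩)
        | (exact absurd hh (by decide))
        | (exfalso; rcases hh with ⟨hne, hc | hc⟩ <;> first
            | (exact absurd hc (by assumption))
            | (exact hne rfl))

end Cycles


section Aux

/-- Product of two order isomorphisms. -/
def orderIsoProdCongr {α β γ δ : Type*} [Preorder α] [Preorder β] [Preorder γ] [Preorder δ]
    (e₁ : α ≃o β) (e₂ : γ ≃o δ) : α × γ ≃o β × δ where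
  toEquiv := Equiv.prodCongr e₁.toEquiv e₂.toEquiv
  map_rel_iff' := by
    intro s t
    simp [Prod.le_def, Equiv.prodCongr_apply, e₁.le_iff_le, e₂.le_iff_le]

/-- Decomposition of a bounded distributive lattice along a complemented pair. -/
def complDecomp {L : Type*} [DistribLattice L] [BoundedOrder L] {a v : L}
    (hinf : a ⊓ v = ⊥) (hsup : a ⊔ v = ⊤) : L ≃o ↥(Set.Iic a) × ↥(Set.Iic v) where
  toFun x := (⟨x ⊓ a, by simp [Set.mem_Iic]⟩, ⟨x ⊓ v, by simp [Set.mem_Iic]⟩)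
  invFun s := (s.1 : L) ⊔ (s.2 : L)
  left_inv x := by
    simp only [← inf_sup_left, hsup, inf_top_eq]
  right_inv s := by
    obtain ⟨⟨s₁, h₁⟩, ⟨s₂, h₂⟩⟩ := s
    simp only [Set.mem_Iic] at h₁ h₂
    have e₁ : (s₁ ⊔ s₂) ⊓ a = s₁ := by
      rw [inf_sup_right, inf_eq_left.mpr h₁]
      have : s₂ ⊓ a ≤ v ⊓ a := inf_le_inf_right _ h₂
      rw [inf_comm v a, hinf] at this
      rw [le_bot_iff.mp this, sup_bot_eq]
    have e₂ : (s₁ ⊔ s₂) ⊓ v = s₂ := by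
      rw [inf_sup_right, inf_eq_left.mpr h₂]
      have : s₁ ⊓ v ≤ a ⊓ v := inf_le_inf_right _ h₁
      rw [hinf] at this
      rw [le_bot_iff.mp this, bot_sup_eq]
    ext <;> simp [e₁, e₂]
  map_rel_iff' := by
    intro s t
    simp only [Equiv.coe_fn_mk, Prod.mk_le_mk, Subtype.mk_le_mk]
    constructor
    · rintro ⟨h₁, h₂⟩
      calc s = s ⊓ (a ⊔ v) := by rw [hsup, inf_top_eq]
        _ = s ⊓ a ⊔ s ⊓ v := inf_sup_left _ _ _
        _ ≤ t ⊓ a ⊔ t ⊓ v := sup_le_sup h₁ h₂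
        _ ≤ t := sup_le inf_le_left inf_le_left
    · intro h
      exact ⟨inf_le_inf_right _ h, inf_le_inf_right _ h⟩

end Aux


section Main

/-- Let `L` be a finite distributive lattice with at least three elements that is simple
(has no apex, i.e. no element other than `⊥` and `⊤` comparable to every element).  Then
the comparability graph of `L` is chordal iff `L` is order-isomorphic to
`Fin 2 × Fin (n+1)` (componentwise order) for some `n ≥ 1`, i.e. to the divisor lattice
`D_{2·3^n}`. -/
theorem statement8 {L : Type*} [DistribLattice L] [Fintype L] [BoundedOrder L]
    (hcard : 3 ≤ Fintype.card L)
    (hsimple : ¬ ∃ a : L, a ≠ ⊥ ∧ a ≠ ⊤ ∧ ∀ x : L, a ≤ x ∨ x ≤ a) :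
    (compGraph L).Chordal ↔
      ∃ n : ℕ, 1 ≤ n ∧ Nonempty (L ≃o Fin 2 × Fin (n + 1)) := by
  classical
  constructor
  · -- forward direction
    intro hch
    haveI : Nontrivial L := Fintype.one_lt_card_iff_nontrivial.mp (by omega)
    obtain ⟨c₁, c₂, c₃, hc12, hc13, hc23⟩ :=
      Fintype.two_lt_card_iff.mp (by omega : 2 < Fintype.card L)
    -- two atoms
    have hatoms : ∃ a b : L, IsAtom a ∧ IsAtom b ∧ a ≠ b := by
      obtain ⟨a, ha, -⟩ := (eq_bot_or_exists_atom_le (⊤ : L)).resolve_left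
        (fun h => (bot_ne_top (α := L)) h.symm)
      by_contra hcon
      push_neg at hcon
      have huniq : ∀ b : L, IsAtom b → b = a := fun b hb => hcon b a hb ha
      apply hsimple
      refine ⟨a, ha.1, ?_, ?_⟩
      · intro htop
        have hall : ∀ x : L, x = ⊥ ∨ x = ⊤ := by
          intro x
          rcases eq_bot_or_exists_atom_le x with h | ⟨a', ha', hax⟩
          · exact Or.inl h
          · refine Or.inr (top_le_iff.mp ?_)
            rw [← htop, ← huniq a' ha']
            exact hax
        rcases hall c₁ with rfl | rfl <;> rcases hall c₂ with rfl | rfl <;>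
          rcases hall c₃ with rfl | rfl <;>
          first | exact hc12 rfl | exact hc13 rfl | exact hc23 rfl
      · intro x
        rcases eq_bot_or_exists_atom_le x with rfl | ⟨a', ha', hax⟩
        · exact Or.inr bot_le
        · rw [huniq a' ha'] at hax
          exact Or.inl hax
    -- two coatoms
    have hcoatoms : ∃ u v : L, IsCoatom u ∧ IsCoatom v ∧ u ≠ v := by
      obtain ⟨u, hu, -⟩ := (eq_top_or_exists_le_coatom (⊥ : L)).resolve_left
        (fun h => (bot_ne_top (α := L)) h)
      by_contra hcon
      push_neg at hcon
      have huniq : ∀ w : L, IsCoatom w → w = u := fun w hw => hcon w u hw hu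
      apply hsimple
      refine ⟨u, ?_, hu.1, ?_⟩
      · intro hbot
        have hall : ∀ x : L, x = ⊥ ∨ x = ⊤ := by
          intro x
          rcases eq_top_or_exists_le_coatom x with h | ⟨u', hu', hxu⟩
          · exact Or.inr h
          · refine Or.inl (le_bot_iff.mp ?_)
            rw [← hbot, ← huniq u' hu']
            exact hxu
        rcases hall c₁ with rfl | rfl <;> rcases hall c₂ with rfl | rfl <;>
          rcases hall c₃ with rfl | rfl <;>
          first | exact hc12 rfl | exact hc13 rfl | exact hc23 rfl
      · intro x
        rcases eq_top_or_exists_le_coatom x with rfl | ⟨u', hu', hxu⟩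
        · exact Or.inl le_top
        · rw [huniq u' hu'] at hxu
          exact Or.inr hxu
    -- some atom is not below some coatom
    obtain ⟨a, v, ha, hv, hav⟩ : ∃ a v : L, IsAtom a ∧ IsCoatom v ∧ ¬ a ≤ v := by
      by_contra hcon
      push_neg at hcon
      obtain ⟨a, b, ha, hb, hab⟩ := hatoms
      obtain ⟨u, v, hu, hv, huv⟩ := hcoatoms
      have hab' : ¬ a ≤ b := fun h => hab ((hb.le_iff.mp h).resolve_left ha.1)
      have hba' : ¬ b ≤ a := fun h => hab (((ha.le_iff.mp h).resolve_left hb.1)).symm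
      have huv' : ¬ u ≤ v := fun h => huv (((hu.le_iff.mp h).resolve_left hv.1)).symm
      have hvu' : ¬ v ≤ u := fun h => huv ((hv.le_iff.mp h).resolve_left hu.1)
      exact cyc4 hab' hba' huv' hvu' (hcon a u ha hu) (hcon a v ha hv)
        (hcon b u hb hu) (hcon b v hb hv) hch
    have hinf : a ⊓ v = ⊥ := by
      rcases ha.le_iff.mp (inf_le_left : a ⊓ v ≤ a) with h | h
      · exact h
      · exact absurd (h ▸ inf_le_right) hav
    have hsup : a ⊔ v = ⊤ := by
      rcases hv.le_iff.mp (le_sup_right : v ≤ a ⊔ v) with h | h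
      · exact h
      · exact absurd (h ▸ le_sup_left) hav
    -- everything below v forms a chain
    have hchain : ∀ x y : L, x ≤ v → y ≤ v → x ≤ y ∨ y ≤ x := by
      intro x y hxv hyv
      by_contra hcon
      push_neg at hcon
      obtain ⟨h1, h2⟩ := hcon
      have hax : ¬ a ≤ x := fun h => hav (h.trans hxv)
      have hay : ¬ a ≤ y := fun h => hav (h.trans hyv)
      have hxa : ¬ x ≤ a := by
        intro h
        rcases ha.le_iff.mp h with rfl | rfl
        · exact h1 bot_le
        · exact hav hxv
      have hya : ¬ y ≤ a := by
        intro h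
        rcases ha.le_iff.mp h with rfl | rfl
        · exact h2 bot_le
        · exact hav hyv
      have hxainf : x ⊓ a = ⊥ := by
        rcases ha.le_iff.mp (inf_le_right : x ⊓ a ≤ a) with h | h
        · exact h
        · exact absurd (h ▸ inf_le_left) hax
      have hyainf : y ⊓ a = ⊥ := by
        rcases ha.le_iff.mp (inf_le_right : y ⊓ a ≤ a) with h | h
        · exact h
        · exact absurd (h ▸ inf_le_left) hay
      refine cyc6 h1 h2 hya hay hxa hax ?_ ?_ ?_ hch
      · intro h
        apply h1
        have hx' : x ⊓ (y ⊔ a) = x := inf_eq_left.mpr h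
        rw [inf_sup_left, hxainf, sup_bot_eq] at hx'
        exact hx' ▸ inf_le_right
      · intro h
        apply h2
        have hy' : y ⊓ (a ⊔ x) = y := inf_eq_left.mpr h
        rw [inf_sup_left, hyainf, bot_sup_eq] at hy'
        exact hy' ▸ inf_le_right
      · exact fun h => hav (h.trans (sup_le hxv hyv))
    -- linear orders on the two intervals
    haveI htotv : IsTotal ↥(Set.Iic v) (· ≤ ·) := ⟨fun s t => by
      have := hchain s t s.2 t.2
      simpa using this⟩
    haveI htota : IsTotal ↥(Set.Iic a) (· ≤ ·) := ⟨fun s t => by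
      rcases ha.le_iff.mp (Set.mem_Iic.mp s.2) with h | h
      · refine Or.inl ?_
        have : (s : L) ≤ (t : L) := by rw [h]; exact bot_le
        exact this
      · refine Or.inr ?_
        have : (t : L) ≤ (s : L) := by rw [h]; exact Set.mem_Iic.mp t.2
        exact this⟩
    letI : LinearOrder ↥(Set.Iic v) := Lattice.toLinearOrder _
    letI : LinearOrder ↥(Set.Iic a) := Lattice.toLinearOrder _
    letI fA : Fintype ↥(Set.Iic a) := Fintype.ofFinite _
    letI fV : Fintype ↥(Set.Iic v) := Fintype.ofFinite _
    have hcard2 : Fintype.card ↥(Set.Iic a) = 2 := by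
      rw [← Nat.card_eq_fintype_card, Nat.card_eq_two_iff]
      refine ⟨⟨⊥, Set.mem_Iic.mpr bot_le⟩, ⟨a, Set.mem_Iic.mpr le_rfl⟩, ?_, ?_⟩
      · intro h
        exact ha.1 (congrArg Subtype.val h).symm
      · ext s
        simp only [Set.mem_insert_iff, Set.mem_singleton_iff, Set.mem_univ, iff_true]
        rcases ha.le_iff.mp (Set.mem_Iic.mp s.2) with h | h
        · left; exact Subtype.ext h
        · right; exact Subtype.ext h
    set N := Fintype.card ↥(Set.Iic v) with hNdef
    have eqv : L ≃o Fin 2 × Fin N :=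
      (complDecomp hinf hsup).trans
        (orderIsoProdCongr (monoEquivOfFin _ hcard2).symm (monoEquivOfFin _ rfl).symm)
    have hcardL : Fintype.card L = 2 * N := by
      rw [Fintype.card_congr eqv.toEquiv]
      simp
    refine ⟨N - 1, by omega, ⟨?_⟩⟩
    have hN' : N - 1 + 1 = N := by omega
    rw [hN']
    exact eqv
  · -- converse direction
    rintro ⟨n, hn1, ⟨e⟩⟩
    rintro ⟨k, f, hk, hinj, hadj⟩
    set g : ZMod k → Fin 2 × Fin (n + 1) := fun i => e (f i) with hg
    have ginj : Function.Injective g := fun i j h => hinj (e.injective h)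
    have gadj : ∀ i j : ZMod k,
        (compGraph (Fin 2 × Fin (n + 1))).Adj (g i) (g j) ↔ (j = i + 1 ∨ i = j + 1) := by
      intro i j
      rw [← hadj i j, compGraph_adj, compGraph_adj]
      simp [hg, e.le_iff_le, e.injective.ne_iff]
    have hno : ∀ c : ℕ, 0 < c → c < k → ((c : ℕ) : ZMod k) ≠ 0 := by
      intro c h1 h2 hc
      rw [ZMod.natCast_eq_zero_iff] at hc
      have := Nat.le_of_dvd h1 hc
      omega
    have hcomp_of_fst : ∀ s t : Fin 2 × Fin (n + 1), s.1 = t.1 → s ≤ t ∨ t ≤ s := by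
      intro s t h
      rcases le_total s.2 t.2 with h2 | h2
      · exact Or.inl (Prod.le_def.mpr ⟨h.le, h2⟩)
      · exact Or.inr (Prod.le_def.mpr ⟨h.symm.le, h2⟩)
    have hstep : ∀ i : ZMod k, (g i).1 ≠ (g (i + 2)).1 := by
      intro i hfst
      have hcons : ¬ ((i + 2 = i + 1) ∨ (i = (i + 2) + 1)) := by
        rintro (h | h)
        · refine hno 1 (by omega) (by omega) ?_
          push_cast
          linear_combination h
        · refine hno 3 (by omega) (by omega) ?_
          push_cast
          linear_combination -h
      have hne : g i ≠ g (i + 2) := by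
        intro h
        refine hno 2 (by omega) (by omega) ?_
        push_cast
        linear_combination -(ginj h)
      exact hcons ((gadj i (i + 2)).mp ⟨hne, hcomp_of_fst _ _ hfst⟩)
    rcases Nat.even_or_odd k with hev | hodd
    · -- k even
      by_cases hk4 : k = 4
      · -- k = 4 : the crown analysis
        subst hk4
        have c01 := (compGraph_adj.mp ((gadj 0 1).mpr (by decide))).2
        have c12 := (compGraph_adj.mp ((gadj 1 2).mpr (by decide))).2
        have c23 := (compGraph_adj.mp ((gadj 2 3).mpr (by decide))).2
        have c30 := (compGraph_adj.mp ((gadj 3 0).mpr (by decide))).2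
        have i02 : ¬ ((g 0 ≤ g 2) ∨ (g 2 ≤ g 0)) := by
          intro hc
          have hne : g 0 ≠ g 2 := fun h => absurd (ginj h) (by decide)
          have := (gadj 0 2).mp ⟨hne, hc⟩
          revert this
          decide
        have i13 : ¬ ((g 1 ≤ g 3) ∨ (g 3 ≤ g 1)) := by
          intro hc
          have hne : g 1 ≠ g 3 := fun h => absurd (ginj h) (by decide)
          have := (gadj 1 3).mp ⟨hne, hc⟩
          revert this
          decide
        have hle : ∀ s t : Fin 2 × Fin (n + 1),
            (s ≤ t) ↔ (s.1.val ≤ t.1.val ∧ s.2.val ≤ t.2.val) := by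
          intro s t
          rw [Prod.le_def, Fin.le_def, Fin.le_def]
        rw [hle, hle] at c01 c12 c23 c30 i02 i13
        have b0 := (g 0).1.isLt
        have b1 := (g 1).1.isLt
        have b2 := (g 2).1.isLt
        have b3 := (g 3).1.isLt
        omega
      · -- k even, k ≥ 6
        have hk6 : 6 ≤ k := by
          rcases hev with ⟨m, hm⟩
          omega
        have s0 : (g 0).1 ≠ (g 2).1 := by
          have := hstep 0
          rwa [zero_add] at this
        have s2 : (g 2).1 ≠ (g 4).1 := by
          have := hstep 2
          rwa [show (2 : ZMod k) + 2 = 4 by norm_num] at this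
        have s04 : (g 0).1 ≠ (g 4).1 := by
          intro hfst
          have hne : g 0 ≠ g 4 := by
            intro h
            refine hno 4 (by omega) (by omega) ?_
            push_cast
            linear_combination -(ginj h)
          rcases (gadj 0 4).mp ⟨hne, hcomp_of_fst _ _ hfst⟩ with h | h
          · refine hno 3 (by omega) (by omega) ?_
            push_cast
            linear_combination h
          · refine hno 5 (by omega) (by omega) ?_
            push_cast
            linear_combination -h
        have b0 := (g 0).1.isLt
        have b2 := (g 2).1.isLt
        have b4 := (g 4).1.isLt
        have e1 : (g 0).1.val ≠ (g 2).1.val := fun h => s0 (Fin.val_injective h)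
        have e2 : (g 2).1.val ≠ (g 4).1.val := fun h => s2 (Fin.val_injective h)
        have e3 : (g 0).1.val ≠ (g 4).1.val := fun h => s04 (Fin.val_injective h)
        omega
    · -- k odd: parity argument along the cycle
      set F : ℕ → Fin 2 := fun m => (g ((2 * m : ℕ) : ZMod k)).1 with hF
      have hFstep : ∀ m : ℕ, F (m + 1) ≠ F m := by
        intro m he
        apply hstep ((2 * m : ℕ) : ZMod k)
        have hcast : ((2 * (m + 1) : ℕ) : ZMod k) = ((2 * m : ℕ) : ZMod k) + 2 := by
          push_cast
          ring
        have : F (m + 1) = (g (((2 * m : ℕ) : ZMod k) + 2)).1 := by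
          rw [hF]
          simp only
          rw [hcast]
        rw [this] at he
        exact he.symm
      have claim : ∀ m : ℕ, (F m).val = if Even m then (F 0).val else 1 - (F 0).val := by
        intro m
        induction m with
        | zero => simp
        | succ m ih =>
          have hne : (F (m + 1)).val ≠ (F m).val := fun h => hFstep m (Fin.val_injective h)
          have b1 := (F (m + 1)).isLt
          have b2 := (F m).isLt
          have b3 := (F 0).isLt
          rcases Nat.even_or_odd m with he | ho
          · rw [if_neg (by simp [Nat.even_add_one, he])]
            rw [if_pos he] at ih
            omega
          · rw [if_pos (by simp [Nat.even_add_one, Nat.not_even_iff_odd.mpr ho])]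
            rw [if_neg (Nat.not_even_iff_odd.mpr ho)] at ih
            omega
      have hFk : F k = F 0 := by
        have hidx : ((2 * k : ℕ) : ZMod k) = ((2 * 0 : ℕ) : ZMod k) := by
          push_cast [ZMod.natCast_self]
          ring
        exact congrArg (fun z => (g z).1) hidx
      have h1 := claim k
      rw [if_neg (Nat.not_even_iff_odd.mpr hodd), hFk] at h1
      have b := (F 0).isLt
      omega

end Main
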